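/- The forward-mapping approximation ζ̃(z) = (z − z_c) · Complex.exp(Γ + ∑_{k} Q k · Complex.log((z − Z k)/(z − z_c))) is complex-differentiable (holomorphic) on the complement of the union of the closed line segments joining z_c to the charge points Z k; that is, ζ̃ is DifferentiableOn ℂ on (⋃_{k} segment ℝ z_c (Z k))ᶜ. -/

import Mathlib

theorem stmt_6 (N : ℕ) (hN : 0 < N) (Q : Fin N → ℝ) (Z : Fin N → ℂ) (z_c : ℂ) (Γ : ℝ) :
    DifferentiableOn ℂ
      (fun z : ℂ =>
        (z - z_c) * Complex.exp ((Γ : ℂ) + ∑ k, (Q k : ℂ) * Complex.log ((z - Z k) / (z - z_c))))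
      (⋃ k, segment ℝ z_c (Z k))ᶜ := by
  intro z hz
  simp only [Set.mem_compl_iff, Set.mem_iUnion, not_exists] at hz
  have hzc : z ≠ z_c := by
    intro h
    exact hz ⟨0, hN⟩ (h ▸ left_mem_segment ℝ z_c (Z ⟨0, hN⟩))
  have hden : z - z_c ≠ 0 := sub_ne_zero.mpr hzc
  have hslit : ∀ k, (z - Z k) / (z - z_c) ∈ Complex.slitPlane := by
    intro k
    by_contra h
    rw [Complex.mem_slitPlane_iff] at h
    push_neg at h
    obtain ⟨hre, him⟩ := h
    set w := (z - Z k) / (z - z_c) with hw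
    set t := w.re with ht
    have hwr : w = (t : ℂ) := Complex.ext rfl (by simpa using him)
    have ht0 : t ≤ 0 := hre
    have heq : z - Z k = (t : ℂ) * (z - z_c) := by
      have := hwr
      rw [hw, div_eq_iff hden] at this
      exact this
    have h1t : (0:ℝ) < 1 - t := by linarith
    have h1t' : ((1 - t : ℝ) : ℂ) ≠ 0 := by
      exact_mod_cast Complex.ofReal_ne_zero.mpr (ne_of_gt h1t)
    apply hz k
    refine ⟨-t / (1 - t), 1 / (1 - t),
      div_nonneg (by linarith) h1t.le, div_nonneg one_pos.le h1t.le, ?_, ?_⟩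
    · rw [← add_div]
      field_simp
      ring
    · rw [Complex.real_smul, Complex.real_smul]
      push_cast
      have h1t'' : (1 : ℂ) - (t : ℂ) ≠ 0 := by push_cast at h1t'; exact h1t'
      field_simp
      linear_combination (-1 : ℂ) * heq
  apply DifferentiableAt.differentiableWithinAt
  apply DifferentiableAt.mul
  · exact differentiableAt_id.sub_const z_c
  · apply DifferentiableAt.cexp
    apply DifferentiableAt.const_add
    apply DifferentiableAt.fun_sum
    intro k _
    exact DifferentiableAt.const_mul
      (((differentiableAt_id.sub_const (Z k)).div (differentiableAt_id.sub_const z_c) hden).clog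
        (hslit k)) _
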